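/- Let n ≥ 0 be an integer and let f be a polynomial with complex coefficients of degree at most n+1, with a_{n+1} the coefficient of x^{n+1} in f. Then for all complex numbers x and y with y ∉ {0, -1, -2, ..., -n}, one has ∑_{k=0}^{n} C(n,k) (-1)^k f(x-k)/(y+k) = n! · f(x+y) / (y(y+1)⋯(y+n)) − n! · a_{n+1}. -/

import Mathlib

open Finset Nat

lemma pascal_split (n : ℕ) (a : ℕ → ℂ) :
    ∑ k ∈ Finset.range (n + 2), ((n+1).choose k : ℂ) * (-1) ^ k * a k =
      ∑ k ∈ Finset.range (n + 1), (n.choose k : ℂ) * (-1) ^ k * (a k - a (k+1)) := by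
  rw [Finset.sum_range_succ' (fun k => ((n+1).choose k : ℂ) * (-1) ^ k * a k) (n+1)]
  have h1 : ∀ k ∈ Finset.range (n+1),
      ((n+1).choose (k+1) : ℂ) * (-1) ^ (k+1) * a (k+1)
        = -((n.choose k : ℂ) * (-1) ^ k * a (k+1))
          + (n.choose (k+1) : ℂ) * (-1) ^ (k+1) * a (k+1) := by
    intro k _
    rw [Nat.choose_succ_succ]
    push_cast
    ring
  rw [Finset.sum_congr rfl h1, Finset.sum_add_distrib]
  have h2 : ∑ k ∈ Finset.range (n+1), (n.choose (k+1) : ℂ) * (-1) ^ (k+1) * a (k+1)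
      = (∑ k ∈ Finset.range (n+2), (n.choose k : ℂ) * (-1) ^ k * a k)
        - (n.choose 0 : ℂ) * (-1) ^ 0 * a 0 := by
    rw [Finset.sum_range_succ' (fun k => (n.choose k : ℂ) * (-1) ^ k * a k) (n+1)]
    ring
  rw [h2, Finset.sum_range_succ (fun k => (n.choose k : ℂ) * (-1) ^ k * a k) (n+1)]
  simp [Finset.sum_sub_distrib, Nat.choose_succ_self]
  ring_nf
  have h3 : ∀ k ∈ Finset.range (1+n), (n.choose k : ℂ) * (-1)^k * (a k - a (k+1))
      = (n.choose k : ℂ)*(-1)^k*a k - (n.choose k : ℂ)*(-1)^k*a (k+1) := fun k _ => by ring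
  rw [Finset.sum_sub_distrib]
  ring

lemma mono_sum : ∀ (n : ℕ), ∀ i ≤ n, ∀ x : ℂ,
    ∑ k ∈ Finset.range (n+1), (n.choose k : ℂ) * (-1)^k * (x - k)^i
      = if i = n then (n ! : ℂ) else 0 := by
  intro n
  induction n with
  | zero =>
    intro i hi x
    interval_cases i
    simp
  | succ n IH =>
    intro i hi x
    rw [show n+1+1 = n+2 from rfl, pascal_split n (fun k => (x - (k:ℕ))^i)]
    have key : ∀ k : ℕ,
        (x - (k:ℕ))^i - (x - ((k+1:ℕ)):ℂ)^i
          = ∑ j ∈ Finset.range i, (-((-1:ℂ)^(j+i) * (i.choose j : ℂ))) * (x - k)^j := by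
      intro k
      have hsub : (x - ((k+1:ℕ):ℂ)) = (x - (k:ℕ)) - 1 := by push_cast; ring
      rw [hsub, sub_pow (x - (k:ℂ)) 1 i, Finset.sum_range_succ]
      rw [Even.neg_one_pow (⟨i, rfl⟩ : Even (i+i))]
      simp only [one_pow, mul_one, one_mul, Nat.choose_self, Nat.cast_one]
      have hc : ∀ S : ℂ, (x - (k:ℕ))^i - (S + (x - (k:ℕ))^i) = -S := fun S => by ring
      rw [hc, ← Finset.sum_neg_distrib]
      apply Finset.sum_congr rfl
      intro j _
      ring
    have step1 : ∑ k ∈ Finset.range (n+1), (n.choose k : ℂ) * (-1)^k *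
          ((x - (k:ℕ))^i - (x - ((k+1:ℕ)):ℂ)^i)
        = ∑ j ∈ Finset.range i, (-((-1:ℂ)^(j+i) * (i.choose j : ℂ))) *
            ∑ k ∈ Finset.range (n+1), (n.choose k : ℂ) * (-1)^k * (x - k)^j := by
      calc ∑ k ∈ Finset.range (n+1), (n.choose k : ℂ) * (-1)^k *
              ((x - (k:ℕ))^i - (x - ((k+1:ℕ)):ℂ)^i)
          = ∑ k ∈ Finset.range (n+1), ∑ j ∈ Finset.range i,
              (n.choose k : ℂ) * (-1)^k *
                ((-((-1:ℂ)^(j+i) * (i.choose j : ℂ))) * (x - k)^j) := by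
            apply Finset.sum_congr rfl
            intro k _
            rw [key k, Finset.mul_sum]
        _ = ∑ j ∈ Finset.range i, ∑ k ∈ Finset.range (n+1),
              (n.choose k : ℂ) * (-1)^k *
                ((-((-1:ℂ)^(j+i) * (i.choose j : ℂ))) * (x - k)^j) := Finset.sum_comm
        _ = ∑ j ∈ Finset.range i, (-((-1:ℂ)^(j+i) * (i.choose j : ℂ))) *
              ∑ k ∈ Finset.range (n+1), (n.choose k : ℂ) * (-1)^k * (x - k)^j := by
            apply Finset.sum_congr rfl
            intro j _
            rw [Finset.mul_sum]
            apply Finset.sum_congr rfl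
            intro k _
            ring
    rw [step1]
    have step2 : ∀ j ∈ Finset.range i,
        (-((-1:ℂ)^(j+i) * (i.choose j : ℂ))) *
            ∑ k ∈ Finset.range (n+1), (n.choose k : ℂ) * (-1)^k * (x - k)^j
          = if j = n then (-((-1:ℂ)^(j+i) * (i.choose j : ℂ))) * (n ! : ℂ) else 0 := by
      intro j hj
      rw [Finset.mem_range] at hj
      rw [IH j (by omega) x]
      split <;> simp
    rw [Finset.sum_congr rfl step2, Finset.sum_ite_eq' (Finset.range i) n
      (fun j => (-((-1:ℂ)^(j+i) * (i.choose j : ℂ))) * (n ! : ℂ))]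
    by_cases hcase : i = n + 1
    · subst hcase
      rw [if_pos (by simp), if_pos rfl]
      rw [Nat.choose_succ_self_right]
      have : (-1:ℂ)^(n+(n+1)) = -1 := by
        rw [show n + (n+1) = 2*n+1 by omega, pow_succ, pow_mul]
        simp
      rw [this, Nat.factorial_succ]
      push_cast
      ring
    · rw [if_neg (by rw [Finset.mem_range]; omega), if_neg hcase]

lemma poly_diff (n : ℕ) (g : Polynomial ℂ) (hg : g.natDegree ≤ n) (x : ℂ) :
    ∑ k ∈ Finset.range (n+1), (n.choose k : ℂ) * (-1)^k * g.eval (x - k)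
      = (n ! : ℂ) * g.coeff n := by
  have hev : ∀ t : ℂ, g.eval t = ∑ i ∈ Finset.range (n+1), g.coeff i * t^i := fun t =>
    Polynomial.eval_eq_sum_range' (lt_of_le_of_lt hg (lt_add_one n)) t
  calc ∑ k ∈ Finset.range (n+1), (n.choose k : ℂ) * (-1)^k * g.eval (x - k)
      = ∑ k ∈ Finset.range (n+1), ∑ i ∈ Finset.range (n+1),
          g.coeff i * ((n.choose k : ℂ) * (-1)^k * (x - k)^i) := by
        apply Finset.sum_congr rfl
        intro k _
        rw [hev (x - k), Finset.mul_sum]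
        apply Finset.sum_congr rfl
        intro i _
        ring
    _ = ∑ i ∈ Finset.range (n+1), ∑ k ∈ Finset.range (n+1),
          g.coeff i * ((n.choose k : ℂ) * (-1)^k * (x - k)^i) := Finset.sum_comm
    _ = ∑ i ∈ Finset.range (n+1), g.coeff i * (if i = n then (n ! : ℂ) else 0) := by
        apply Finset.sum_congr rfl
        intro i hi
        rw [← Finset.mul_sum, mono_sum n i (by rw [Finset.mem_range] at hi; omega) x]
    _ = (n ! : ℂ) * g.coeff n := by
        simp only [mul_ite, mul_zero]
        rw [Finset.sum_ite_eq' (Finset.range (n+1)) n (fun i => g.coeff i * (n ! : ℂ)),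
          if_pos (by simp)]
        ring

lemma frac_sum : ∀ (n : ℕ) (y : ℂ), (∀ k ∈ Finset.range (n+1), y + (k:ℕ) ≠ 0) →
    ∑ k ∈ Finset.range (n+1), (n.choose k : ℂ) * (-1)^k / (y + k)
      = (n ! : ℂ) / ∏ j ∈ Finset.range (n+1), (y + j) := by
  intro n
  induction n with
  | zero => intro y hy; simp
  | succ n IH =>
    intro y hy
    have hmul : ∀ k ∈ Finset.range (n+2), ((n+1).choose k : ℂ) * (-1)^k / (y + k)
        = ((n+1).choose k : ℂ) * (-1)^k * (1 / (y + k)) := fun k _ => by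
      rw [div_eq_mul_one_div]
    rw [Finset.sum_congr rfl hmul, pascal_split n (fun k => 1 / (y + (k:ℕ)))]
    have hsplit : ∀ k ∈ Finset.range (n+1),
        (n.choose k : ℂ) * (-1)^k * (1/(y + (k:ℕ)) - 1/(y + ((k+1:ℕ)):ℂ))
          = (n.choose k : ℂ) * (-1)^k / (y + k)
            - (n.choose k : ℂ) * (-1)^k / ((y+1) + k) := by
      intro k _
      have : (y + ((k+1:ℕ):ℂ)) = (y + 1) + (k:ℕ) := by push_cast; ring
      rw [this]
      rw [div_eq_mul_one_div ((n.choose k : ℂ) * (-1)^k) (y + (k:ℕ)),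
        div_eq_mul_one_div ((n.choose k : ℂ) * (-1)^k) ((y+1) + (k:ℕ))]
      ring
    rw [Finset.sum_congr rfl hsplit, Finset.sum_sub_distrib]
    have hy1 : ∀ k ∈ Finset.range (n+1), y + (k:ℕ) ≠ 0 := fun k hk =>
      hy k (by rw [Finset.mem_range] at *; omega)
    have hy2 : ∀ k ∈ Finset.range (n+1), (y+1) + (k:ℕ) ≠ 0 := by
      intro k hk
      have : (y+1) + (k:ℕ) = y + ((k+1:ℕ):ℂ) := by push_cast; ring
      rw [this]
      exact hy (k+1) (by rw [Finset.mem_range] at *; omega)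
    rw [IH y hy1, IH (y+1) hy2]
    set P1 := ∏ j ∈ Finset.range (n+1), (y + (j:ℕ)) with hP1def
    set P2 := ∏ j ∈ Finset.range (n+1), ((y+1) + (j:ℕ)) with hP2def
    set P := ∏ j ∈ Finset.range (n+2), (y + (j:ℕ)) with hPdef
    have hP1 : P = P1 * (y + ((n+1:ℕ):ℂ)) := Finset.prod_range_succ _ (n+1)
    have hP2 : P = P2 * y := by
      rw [hPdef, Finset.prod_range_succ' (fun j => y + (j:ℕ)) (n+1)]
      congr 1
      · apply Finset.prod_congr rfl
        intro j _
        push_cast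
        ring
      · simp
    have hP1ne : P1 ≠ 0 := Finset.prod_ne_zero_iff.mpr hy1
    have hP2ne : P2 ≠ 0 := Finset.prod_ne_zero_iff.mpr hy2
    have hyne : y ≠ 0 := by simpa using hy 0 (by simp)
    have hnne : y + ((n+1:ℕ):ℂ) ≠ 0 := hy (n+1) (by simp)
    have e1 : (n ! : ℂ) / P1 = (n ! : ℂ) * (y + ((n+1:ℕ):ℂ)) / P := by
      rw [hP1, mul_div_mul_right _ _ hnne]
    have e2 : (n ! : ℂ) / P2 = (n ! : ℂ) * y / P := by
      rw [hP2, mul_div_mul_right _ _ hyne]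
    rw [e1, e2, div_sub_div_same]
    congr 1
    push_cast [Nat.factorial_succ]
    ring

theorem melzak_formula_deg_succ (n : ℕ) (f : Polynomial ℂ) (hf : f.natDegree ≤ n + 1)
    (x y : ℂ) (hy : ∀ k ∈ Finset.range (n + 1), y + k ≠ 0) :
    ∑ k ∈ Finset.range (n + 1), (n.choose k : ℂ) * (-1) ^ k * f.eval (x - k) / (y + k) =
      (n ! : ℂ) * f.eval (x + y) / (∏ j ∈ Finset.range (n + 1), (y + j)) -
        (n ! : ℂ) * f.coeff (n + 1) := by
  set a : ℂ := x + y with ha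
  set g : Polynomial ℂ := f /ₘ (Polynomial.X - Polynomial.C a) with hg
  set c : ℂ := f.eval a with hc
  have hmonic := Polynomial.monic_X_sub_C a
  have hdecomp : f = Polynomial.C c + (Polynomial.X - Polynomial.C a) * g := by
    conv_lhs => rw [← Polynomial.modByMonic_add_div f (Polynomial.X - Polynomial.C a)]
    rw [Polynomial.modByMonic_X_sub_C_eq_C_eval]
  have hdegg : g.natDegree ≤ n := by
    rw [hg, Polynomial.natDegree_divByMonic f hmonic, Polynomial.natDegree_X_sub_C]
    omega
  have hcoeff : f.coeff (n+1) = g.coeff n := by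
    have hgn1 : g.coeff (n+1) = 0 :=
      Polynomial.coeff_eq_zero_of_natDegree_lt (by omega)
    conv_lhs => rw [hdecomp]
    rw [Polynomial.coeff_add, Polynomial.coeff_C, if_neg (by omega)]
    rw [sub_mul, Polynomial.coeff_sub, Polynomial.coeff_X_mul]
    rw [Polynomial.coeff_C_mul, hgn1]
    ring
  have heval : ∀ k : ℕ, f.eval (x - k) = c - (y + k) * g.eval (x - k) := by
    intro k
    conv_lhs => rw [hdecomp]
    simp only [Polynomial.eval_add, Polynomial.eval_mul, Polynomial.eval_sub,
      Polynomial.eval_X, Polynomial.eval_C]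
    rw [ha]
    ring
  have hstep : ∀ k ∈ Finset.range (n+1),
      (n.choose k : ℂ) * (-1) ^ k * f.eval (x - k) / (y + k)
        = (n.choose k : ℂ) * (-1)^k * c / (y + k)
          - (n.choose k : ℂ) * (-1)^k * g.eval (x - k) := by
    intro k hk
    rw [heval k]
    field_simp [hy k hk]
  rw [Finset.sum_congr rfl hstep, Finset.sum_sub_distrib]
  have h1 : ∑ k ∈ Finset.range (n+1), (n.choose k : ℂ) * (-1)^k * c / (y + k)
      = c * ((n ! : ℂ) / ∏ j ∈ Finset.range (n+1), (y + j)) := by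
    rw [← frac_sum n y hy, Finset.mul_sum]
    apply Finset.sum_congr rfl
    intro k _
    ring
  rw [h1, poly_diff n g hdegg x, hcoeff]
  ring
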